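/- Assume hypotheses H1, H2 and H3, and let φ ∈ X. Then the unique solution w* ∈ X⁺ of the fixed point equation w = F V(φ, w) belongs to H¹, and ‖w*‖_{H¹} ≤ ‖((I_{X⁺} − F V⁺)↾_{H¹})^{−1}‖_{H¹←H¹} · ‖F V⁻‖_{H¹←X} · ‖φ‖_X. -/

import Mathlib

open MeasureTheory Set Filter

noncomputable section

/-- `ℝ^d` with the Euclidean norm. -/
abbrev Evec (d : ℕ) := EuclideanSpace ℝ (Fin d)

/-- `ℝ^{d×d}`, identified with linear operators on `ℝ^d`, with a fixed norm. -/
abbrev Mtx (d : ℕ) := Evec d →L[ℝ] Evec d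

/-- The operator `F V⁺ : X⁺ → X⁺`: extension of `w` by `0` on `[−τ,0]` followed by `F`. -/
def FVp (d : ℕ) (τ s : ℝ) (C : ℝ → ℝ → Mtx d) (w : ℝ → Evec d) (t : ℝ) : Evec d :=
  ∫ θ in Set.Icc (-τ) (0:ℝ), (C (s+t) θ) (if 0 < t+θ then w (t+θ) else 0)

/-- The operator `F V⁻ : X → X⁺`: extension of `φ` by `0` on `(0,h]` followed by `F`. -/
def FVm (d : ℕ) (τ s : ℝ) (C : ℝ → ℝ → Mtx d) (φ : ℝ → Evec d) (t : ℝ) : Evec d :=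
  ∫ θ in Set.Icc (-τ) (0:ℝ), (C (s+t) θ) (if t+θ ≤ 0 then φ (t+θ) else 0)

/-- `F V(φ, w)`: the function equal to `φ` on `[−τ,0]` and `w` on `(0,h]`, followed by `F`. -/
def FV (d : ℕ) (τ s : ℝ) (C : ℝ → ℝ → Mtx d) (φ w : ℝ → Evec d) (t : ℝ) : Evec d :=
  ∫ θ in Set.Icc (-τ) (0:ℝ), (C (s+t) θ) (if t+θ ≤ 0 then φ (t+θ) else w (t+θ))

/-- `f` belongs to the Sobolev space `H¹([0,h], ℝ^d)`. -/
def MemH1 (d : ℕ) (h : ℝ) (f : ℝ → Evec d) : Prop :=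
  ∃ (a : Evec d) (g : ℝ → Evec d),
    MemLp g 2 (volume.restrict (Set.Icc (0:ℝ) h)) ∧
    ∀ᵐ t ∂(volume.restrict (Set.Icc (0:ℝ) h)), f t = a + ∫ u in (0:ℝ)..t, g u

/-- `f` belongs to `H¹([0,h], ℝ^d)` with `H¹` norm at most `m`. -/
def H1BddBy (d : ℕ) (h : ℝ) (f : ℝ → Evec d) (m : ℝ) : Prop :=
  ∃ (a : Evec d) (g : ℝ → Evec d),
    MemLp g 2 (volume.restrict (Set.Icc (0:ℝ) h)) ∧
    (∀ᵐ t ∂(volume.restrict (Set.Icc (0:ℝ) h)), f t = a + ∫ u in (0:ℝ)..t, g u) ∧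
    (eLpNorm f 2 (volume.restrict (Set.Icc (0:ℝ) h))).toReal ^ 2 +
      (eLpNorm g 2 (volume.restrict (Set.Icc (0:ℝ) h))).toReal ^ 2 ≤ m ^ 2

namespace FPAux

open scoped ENNReal NNReal

variable {d : ℕ}

lemma restrict_null_of_null {S : Set ℝ} (A : Set ℝ) (hS : volume S = 0) :
    volume.restrict A S = 0 :=
  le_antisymm (le_trans (Measure.le_iff'.1 Measure.restrict_le_self _) hS.le) (zero_le)

/-- a.e.-measurability of `θ ↦ C (s+t) θ (v θ)` given AESM `v`. -/
lemma aesm_apply (τ s t : ℝ) (C : ℝ → ℝ → Mtx d)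
    (hCmeas : StronglyMeasurable (Function.uncurry C))
    (v : ℝ → Evec d)
    (hv : AEStronglyMeasurable v (volume.restrict (Set.Icc (-τ) (0:ℝ)))) :
    AEStronglyMeasurable (fun θ => (C (s+t) θ) (v θ))
      (volume.restrict (Set.Icc (-τ) (0:ℝ))) := by
  have hsmB : StronglyMeasurable (fun θ : ℝ => C (s+t) θ) :=
    hCmeas.comp_measurable (measurable_const.prodMk measurable_id)
  have hsm : StronglyMeasurable (fun θ => (C (s+t) θ) (hv.mk v θ)) :=
    isBoundedBilinearMap_apply.continuous.comp_stronglyMeasurable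
      (hsmB.prodMk hv.stronglyMeasurable_mk)
  have heq : (fun θ => (C (s+t) θ) (v θ))
      =ᵐ[volume.restrict (Set.Icc (-τ) (0:ℝ))] (fun θ => (C (s+t) θ) (hv.mk v θ)) := by
    filter_upwards [hv.ae_eq_mk] with θ hθ
    rw [hθ]
  exact hsm.aestronglyMeasurable.congr heq.symm

/-- Integrability of `θ ↦ C (s+t) θ (v θ)` from an `L∞` bound on `C` and a bound on `v`. -/
lemma integrable_apply (τ s t : ℝ) (C : ℝ → ℝ → Mtx d) (M : ℝ≥0∞) (hM : M ≠ ⊤)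
    (hCt : ∀ᵐ θ ∂(volume.restrict (Set.Icc (-τ) (0:ℝ))), (‖C (s+t) θ‖₊ : ℝ≥0∞) ≤ M)
    (v : ℝ → Evec d)
    (hvsm : AEStronglyMeasurable (fun θ => (C (s+t) θ) (v θ))
      (volume.restrict (Set.Icc (-τ) (0:ℝ))))
    (B : ℝ → ℝ≥0∞)
    (hvB : ∀ᵐ θ ∂(volume.restrict (Set.Icc (-τ) (0:ℝ))), (‖v θ‖₊ : ℝ≥0∞) ≤ B (t+θ))
    (hB : (∫⁻ u, B u) < ⊤) :
    Integrable (fun θ => (C (s+t) θ) (v θ)) (volume.restrict (Set.Icc (-τ) (0:ℝ))) := by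
  refine ⟨hvsm, ?_⟩
  rw [hasFiniteIntegral_def]
  calc ∫⁻ θ, ‖(C (s+t) θ) (v θ)‖₊ ∂(volume.restrict (Set.Icc (-τ) (0:ℝ)))
      ≤ ∫⁻ θ, M * B (t+θ) ∂(volume.restrict (Set.Icc (-τ) (0:ℝ))) := by
        refine lintegral_mono_ae ?_
        filter_upwards [hCt, hvB] with θ h1 h2
        calc (‖(C (s+t) θ) (v θ)‖₊ : ℝ≥0∞)
            ≤ (‖C (s+t) θ‖₊ : ℝ≥0∞) * ‖v θ‖₊ := by
              rw [← ENNReal.coe_mul]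
              exact_mod_cast (C (s+t) θ).le_opNNNorm (v θ)
          _ ≤ M * B (t+θ) := mul_le_mul' h1 h2
    _ ≤ ∫⁻ θ, M * B (t+θ) ∂volume := setLIntegral_le_lintegral _ _
    _ = M * ∫⁻ θ, B (t+θ) ∂volume := lintegral_const_mul' _ _ hM
    _ = M * ∫⁻ u, B u ∂volume := by rw [lintegral_add_left_eq_self (fun u => B u) t]
    _ < ⊤ := ENNReal.mul_lt_top hM.lt_top hB

lemma aesm_shift_phi (τ t : ℝ) (ht : 0 ≤ t) (φ : ℝ → Evec d)
    (hφ : AEStronglyMeasurable φ (volume.restrict (Set.Icc (-τ) (0:ℝ)))) :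
    AEStronglyMeasurable (fun θ => if t+θ ≤ 0 then φ (t+θ) else 0)
      (volume.restrict (Set.Icc (-τ) (0:ℝ))) := by
  set φ' := hφ.mk φ with hφ'
  have hsm : StronglyMeasurable (fun θ => if t+θ ≤ 0 then φ' (t+θ) else 0) :=
    StronglyMeasurable.ite (measurableSet_le (by fun_prop) measurable_const)
      (hφ.stronglyMeasurable_mk.comp_measurable (by fun_prop)) stronglyMeasurable_const
  have hnull : volume ({u | φ u ≠ φ' u} ∩ Set.Icc (-τ) 0) = 0 := by
    have h1 := hφ.ae_eq_mk
    rw [EventuallyEq, ae_iff, Measure.restrict_apply' measurableSet_Icc] at h1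
    exact h1
  have hpre : volume.restrict (Set.Icc (-τ) (0:ℝ))
      ((fun θ => t + θ) ⁻¹' ({u | φ u ≠ φ' u} ∩ Set.Icc (-τ) 0)) = 0 :=
    restrict_null_of_null _
      ((measurePreserving_add_left volume t).quasiMeasurePreserving.preimage_null hnull)
  refine ⟨_, hsm, ?_⟩
  have hno := (measure_eq_zero_iff_ae_notMem).1 hpre
  filter_upwards [ae_restrict_mem measurableSet_Icc, hno] with θ hmem hn
  simp only [Set.mem_preimage] at hn
  by_cases hc : t + θ ≤ 0
  · simp only [if_pos hc]
    by_contra hne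
    exact hn ⟨hne, ⟨by linarith [hmem.1], hc⟩⟩
  · simp [hc]

lemma aesm_shift_w (τ h t : ℝ) (ht : t ≤ h) (w : ℝ → Evec d)
    (hw : AEStronglyMeasurable w (volume.restrict (Set.Icc (0:ℝ) h))) :
    AEStronglyMeasurable (fun θ => if 0 < t+θ then w (t+θ) else 0)
      (volume.restrict (Set.Icc (-τ) (0:ℝ))) := by
  set w' := hw.mk w with hw'
  have hsm : StronglyMeasurable (fun θ => if 0 < t+θ then w' (t+θ) else 0) :=
    StronglyMeasurable.ite (measurableSet_lt measurable_const (by fun_prop))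
      (hw.stronglyMeasurable_mk.comp_measurable (by fun_prop)) stronglyMeasurable_const
  have hnull : volume ({u | w u ≠ w' u} ∩ Set.Icc 0 h) = 0 := by
    have h1 := hw.ae_eq_mk
    rw [EventuallyEq, ae_iff, Measure.restrict_apply' measurableSet_Icc] at h1
    exact h1
  have hpre : volume.restrict (Set.Icc (-τ) (0:ℝ))
      ((fun θ => t + θ) ⁻¹' ({u | w u ≠ w' u} ∩ Set.Icc 0 h)) = 0 :=
    restrict_null_of_null _
      ((measurePreserving_add_left volume t).quasiMeasurePreserving.preimage_null hnull)
  refine ⟨_, hsm, ?_⟩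
  have hno := (measure_eq_zero_iff_ae_notMem).1 hpre
  filter_upwards [ae_restrict_mem measurableSet_Icc, hno] with θ hmem hn
  simp only [Set.mem_preimage] at hn
  by_cases hc : 0 < t + θ
  · simp only [if_pos hc]
    by_contra hne
    exact hn ⟨hne, ⟨hc.le, by linarith [hmem.2]⟩⟩
  · simp [hc]

lemma ae_slice_bound (τ h s : ℝ)
    (C : ℝ → ℝ → Mtx d)
    (hH1 : MemLp (Function.uncurry C) ⊤
      (volume.restrict (Set.Icc s (s+h) ×ˢ Set.Icc (-τ) (0:ℝ)))) :
    ∃ M : ℝ≥0∞, M ≠ ⊤ ∧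
      ∀ᵐ t ∂(volume.restrict (Set.Icc (0:ℝ) h)),
        ∀ᵐ θ ∂(volume.restrict (Set.Icc (-τ) (0:ℝ))), (‖C (s+t) θ‖₊ : ℝ≥0∞) ≤ M := by
  set M := eLpNormEssSup (Function.uncurry C)
    (volume.restrict (Set.Icc s (s+h) ×ˢ Set.Icc (-τ) (0:ℝ))) with hMdef
  refine ⟨M, ?_, ?_⟩
  · have := hH1.2
    rw [eLpNorm_exponent_top] at this
    exact this.ne
  · have hprod : ∀ᵐ z ∂((volume.restrict (Set.Icc s (s+h))).prod
        (volume.restrict (Set.Icc (-τ) (0:ℝ)))), (‖Function.uncurry C z‖₊ : ℝ≥0∞) ≤ M := by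
      rw [Measure.prod_restrict, ← Measure.volume_eq_prod]
      exact enorm_ae_le_eLpNormEssSup _ _
    have hslice := Measure.ae_ae_of_ae_prod hprod
    have hmap : (volume.restrict (Set.Icc (0:ℝ) h)).map (fun t => s + t)
        = volume.restrict (Set.Icc s (s+h)) := by
      have hpre : (fun t : ℝ => s + t) ⁻¹' Set.Icc s (s+h) = Set.Icc (0:ℝ) h := by
        ext t
        simp only [Set.mem_preimage, Set.mem_Icc]
        constructor <;> (intro hx; exact ⟨by linarith [hx.1], by linarith [hx.2]⟩)
      conv_rhs => rw [← map_add_left_eq_self volume s]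
      rw [Measure.restrict_map (measurable_const_add s) measurableSet_Icc, hpre]
    rw [← hmap] at hslice
    exact ae_of_ae_map (measurable_const_add s).aemeasurable hslice

/-- Key decomposition: `F V(φ,w) = F V⁻ φ + F V⁺ w` a.e. on `[0,h]`. -/
lemma decomp (τ h s : ℝ) (C : ℝ → ℝ → Mtx d)
    (hCmeas : StronglyMeasurable (Function.uncurry C))
    (hH1 : MemLp (Function.uncurry C) ⊤
      (volume.restrict (Set.Icc s (s+h) ×ˢ Set.Icc (-τ) (0:ℝ))))
    (φ w : ℝ → Evec d)
    (hφ : MemLp φ 2 (volume.restrict (Set.Icc (-τ) (0:ℝ))))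
    (hw : MemLp w 2 (volume.restrict (Set.Icc (0:ℝ) h))) :
    ∀ᵐ t ∂(volume.restrict (Set.Icc (0:ℝ) h)),
      FV d τ s C φ w t = FVm d τ s C φ t + FVp d τ s C w t := by
  haveI : IsFiniteMeasure (volume.restrict (Set.Icc (-τ) (0:ℝ))) :=
    ⟨by rw [Measure.restrict_apply_univ]; exact measure_Icc_lt_top⟩
  haveI : IsFiniteMeasure (volume.restrict (Set.Icc (0:ℝ) h)) :=
    ⟨by rw [Measure.restrict_apply_univ]; exact measure_Icc_lt_top⟩
  obtain ⟨M, hM, hMslice⟩ := ae_slice_bound τ h s C hH1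
  have hφ1 : Integrable φ (volume.restrict (Set.Icc (-τ) (0:ℝ))) := hφ.integrable one_le_two
  have hw1 : Integrable w (volume.restrict (Set.Icc (0:ℝ) h)) := hw.integrable one_le_two
  have hB1 : (∫⁻ u, (Set.Icc (-τ) (0:ℝ)).indicator (fun u => (‖φ u‖₊ : ℝ≥0∞)) u) < ⊤ := by
    rw [lintegral_indicator measurableSet_Icc]
    exact hφ1.2
  have hB2 : (∫⁻ u, (Set.Icc (0:ℝ) h).indicator (fun u => (‖w u‖₊ : ℝ≥0∞)) u) < ⊤ := by
    rw [lintegral_indicator measurableSet_Icc]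
    exact hw1.2
  filter_upwards [hMslice, ae_restrict_mem measurableSet_Icc] with t hCt ht
  have hv1 := aesm_shift_phi (d := d) τ t ht.1 φ hφ.1
  have hv2 := aesm_shift_w (d := d) τ h t ht.2 w hw.1
  have hf : Integrable (fun θ => (C (s+t) θ) (if t+θ ≤ 0 then φ (t+θ) else 0))
      (volume.restrict (Set.Icc (-τ) (0:ℝ))) := by
    refine integrable_apply τ s t C M hM hCt _ (aesm_apply τ s t C hCmeas _ hv1) _ ?_ hB1
    filter_upwards [ae_restrict_mem measurableSet_Icc] with θ hθ
    by_cases hc : t + θ ≤ 0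
    · rw [if_pos hc, Set.indicator_of_mem
        (show t+θ ∈ Set.Icc (-τ) (0:ℝ) from ⟨by linarith [hθ.1, ht.1], hc⟩)]
    · simp [hc]
  have hg : Integrable (fun θ => (C (s+t) θ) (if 0 < t+θ then w (t+θ) else 0))
      (volume.restrict (Set.Icc (-τ) (0:ℝ))) := by
    refine integrable_apply τ s t C M hM hCt _ (aesm_apply τ s t C hCmeas _ hv2) _ ?_ hB2
    filter_upwards [ae_restrict_mem measurableSet_Icc] with θ hθ
    by_cases hc : 0 < t + θ
    · rw [if_pos hc, Set.indicator_of_mem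
        (show t+θ ∈ Set.Icc (0:ℝ) h from ⟨hc.le, by linarith [hθ.2, ht.2]⟩)]
    · simp [hc]
  have hpt : ∀ θ, (C (s+t) θ) (if t+θ ≤ 0 then φ (t+θ) else w (t+θ))
      = (C (s+t) θ) (if t+θ ≤ 0 then φ (t+θ) else 0)
        + (C (s+t) θ) (if 0 < t+θ then w (t+θ) else 0) := by
    intro θ
    by_cases hc : t + θ ≤ 0
    · simp [hc, not_lt.mpr hc]
    · simp [hc, not_le.mp hc]
  simp only [FV, FVm, FVp]
  simp_rw [hpt]
  exact integral_add hf hg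

end FPAux

/-- Assume H1, H2 and H3, and let `φ ∈ X`. Then the unique solution
`w* ∈ X⁺` of the fixed point equation `w = F V(φ, w)` belongs to `H¹`, and
`‖w*‖_{H¹} ≤ ‖((I − F V⁺)↾_{H¹})^{−1}‖_{H¹←H¹} · ‖F V⁻‖_{H¹←X} · ‖φ‖_X`
(for any constants `c₁`, `c₂` bounding, respectively, the inverse of `(I − F V⁺)↾_{H¹}`
as an operator on `H¹` and `F V⁻` as an operator from `X` to `H¹`). -/
theorem fixed_point_in_H1
    (d : ℕ) (hd : 0 < d) (τ h s : ℝ) (hτ : 0 < τ) (hh : 0 < h)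
    (C : ℝ → ℝ → Mtx d)
    (hCmeas : StronglyMeasurable (Function.uncurry C))
    -- Hypothesis H1
    (hH1 : MemLp (Function.uncurry C) ⊤
      (volume.restrict (Set.Icc s (s+h) ×ˢ Set.Icc (-τ) (0:ℝ))))
    -- Hypothesis H2
    (hH2 : ∃ b : ℝ, ∀ w : ℝ → Evec d,
      MemLp w 2 (volume.restrict (Set.Icc (0:ℝ) h)) →
      H1BddBy d h (FVp d τ s C w)
        (b * (eLpNorm w 2 (volume.restrict (Set.Icc (0:ℝ) h))).toReal))
    -- Hypothesis H3
    (hH3 : ∃ b : ℝ, ∀ φ : ℝ → Evec d,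
      MemLp φ 2 (volume.restrict (Set.Icc (-τ) (0:ℝ))) →
      H1BddBy d h (FVm d τ s C φ)
        (b * (eLpNorm φ 2 (volume.restrict (Set.Icc (-τ) (0:ℝ)))).toReal))
    -- c₁ bounds the inverse of (I − F V⁺)↾_{H¹} on H¹
    (c₁ : ℝ)
    (hc₁ : ∀ (w f : ℝ → Evec d) (m : ℝ), MemH1 d h w →
      ((fun t => w t - FVp d τ s C w t) =ᵐ[volume.restrict (Set.Icc (0:ℝ) h)] f) →
      H1BddBy d h f m → H1BddBy d h w (c₁ * m))
    -- c₂ bounds F V⁻ : X → H¹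
    (c₂ : ℝ)
    (hc₂ : ∀ φ : ℝ → Evec d,
      MemLp φ 2 (volume.restrict (Set.Icc (-τ) (0:ℝ))) →
      H1BddBy d h (FVm d τ s C φ)
        (c₂ * (eLpNorm φ 2 (volume.restrict (Set.Icc (-τ) (0:ℝ)))).toReal))
    -- φ ∈ X and w* is the solution of the fixed point equation w = F V(φ, w)
    (φ : ℝ → Evec d)
    (hφ : MemLp φ 2 (volume.restrict (Set.Icc (-τ) (0:ℝ))))
    (wstar : ℝ → Evec d)
    (hwstar₁ : MemLp wstar 2 (volume.restrict (Set.Icc (0:ℝ) h)))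
    (hwstar₂ : wstar =ᵐ[volume.restrict (Set.Icc (0:ℝ) h)] FV d τ s C φ wstar) :
    MemH1 d h wstar ∧
    H1BddBy d h wstar
      (c₁ * c₂ * (eLpNorm φ 2 (volume.restrict (Set.Icc (-τ) (0:ℝ)))).toReal) := by
  haveI : IsFiniteMeasure (volume.restrict (Set.Icc (0:ℝ) h)) :=
    ⟨by rw [Measure.restrict_apply_univ]; exact measure_Icc_lt_top⟩
  have hdec := FPAux.decomp τ h s C hCmeas hH1 φ wstar hφ hwstar₁
  have hsum : wstar =ᵐ[volume.restrict (Set.Icc (0:ℝ) h)]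
      (fun t => FVm d τ s C φ t + FVp d τ s C wstar t) := by
    filter_upwards [hwstar₂, hdec] with t h1 h2
    rw [h1, h2]
  obtain ⟨a1, g1, hg1, hae1, -⟩ := hc₂ φ hφ
  obtain ⟨b, hb⟩ := hH2
  obtain ⟨a2, g2, hg2, hae2, -⟩ := hb wstar hwstar₁
  have hint1 : Integrable g1 (volume.restrict (Set.Icc (0:ℝ) h)) := hg1.integrable one_le_two
  have hint2 : Integrable g2 (volume.restrict (Set.Icc (0:ℝ) h)) := hg2.integrable one_le_two
  have hmem : MemH1 d h wstar := by
    refine ⟨a1 + a2, g1 + g2, hg1.add hg2, ?_⟩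
    filter_upwards [hsum, hae1, hae2, ae_restrict_mem measurableSet_Icc] with t h1 h2 h3 ht
    have hsub : Set.uIcc (0:ℝ) t ⊆ Set.Icc (0:ℝ) h := by
      rw [Set.uIcc_of_le ht.1]
      exact Set.Icc_subset_Icc le_rfl ht.2
    have hI1 : IntervalIntegrable g1 volume 0 t :=
      (MeasureTheory.IntegrableOn.mono_set hint1 hsub).intervalIntegrable
    have hI2 : IntervalIntegrable g2 volume 0 t :=
      (MeasureTheory.IntegrableOn.mono_set hint2 hsub).intervalIntegrable
    rw [h1, h2, h3]
    have : ∫ u in (0:ℝ)..t, (g1 + g2) u = (∫ u in (0:ℝ)..t, g1 u) + ∫ u in (0:ℝ)..t, g2 u := by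
      simp only [Pi.add_apply]
      exact intervalIntegral.integral_add hI1 hI2
    rw [this]
    abel
  have hfsub : (fun t => wstar t - FVp d τ s C wstar t)
      =ᵐ[volume.restrict (Set.Icc (0:ℝ) h)] FVm d τ s C φ := by
    filter_upwards [hsum] with t h1
    rw [h1]
    abel
  have hbdd := hc₁ wstar (FVm d τ s C φ) _ hmem hfsub (hc₂ φ hφ)
  rw [← mul_assoc] at hbdd
  exact ⟨hmem, hbdd⟩
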